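/- Let p ≥ 1, c > 0, b ∈ ℝ, and define M(x) = x² - 2bx + c|x|^p on ℝ. Then M attains a minimum on ℝ, and the minimizer is S_{c,p}(b), where S_{c,p}(t) = F_{c,p}^{-1}(t) if p > 1 (with F_{c,p}(t) = t + (cp/2)·sign(t)·|t|^{p-1}), and for p = 1: S_{c,1}(t) = t - c/2 if t > c/2, S_{c,1}(t) = 0 if |t| ≤ c/2, and S_{c,1}(t) = t + c/2 if t < -c/2. -/

import Mathlib

/-- The function `F_{c,p}(t) = t + (c p / 2) · sign t · |t|^(p-1)`. -/
noncomputable def Fcp (c p : ℝ) (t : ℝ) : ℝ :=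
  t + (c * p / 2) * Real.sign t * |t| ^ (p - 1)

/-- The shrinkage function `S_{c,p}`: the inverse of `F_{c,p}` for `p > 1`,
and soft-thresholding with threshold `c/2` for `p = 1`. -/
noncomputable def Scp (c p : ℝ) (t : ℝ) : ℝ :=
  if p = 1 then
    if t > c / 2 then t - c / 2
    else if t < -(c / 2) then t + c / 2
    else 0
  else Function.invFun (Fcp c p) t

/-- Gradient inequality for `t ↦ t^p` on nonneg reals, `p ≥ 1`, `p ≠ 1` branch not needed. -/
lemma rpow_grad_ineq {a s p : ℝ} (ha : 0 ≤ a) (hs : 0 ≤ s) (hp : 1 < p) :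
    s ^ p + p * s ^ (p - 1) * (a - s) ≤ a ^ p := by
  rcases eq_or_lt_of_le hs with h0 | h0
  · rw [← h0]
    rw [Real.zero_rpow (by positivity), Real.zero_rpow (by linarith)]
    simpa using Real.rpow_nonneg ha p
  · have key := one_add_mul_self_le_rpow_one_add (s := a / s - 1) (p := p)
      (by have : 0 ≤ a / s := div_nonneg ha h0.le; linarith) hp.le
    have h1 : (1 : ℝ) + (a / s - 1) = a / s := by ring
    rw [h1] at key
    have hsp : (0:ℝ) < s ^ p := Real.rpow_pos_of_pos h0 p
    have key2 := mul_le_mul_of_nonneg_left key hsp.le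
    rw [Real.div_rpow ha h0.le] at key2
    have hne : s ^ p ≠ 0 := ne_of_gt hsp
    rw [mul_div_cancel₀ _ hne] at key2
    have hsp1 : s ^ p = s ^ (p - 1) * s := by
      rw [← Real.rpow_add_one (ne_of_gt h0)]; ring_nf
    calc s ^ p + p * s ^ (p - 1) * (a - s)
        = s ^ p * (1 + p * (a / s - 1)) := by
          rw [hsp1]; field_simp
      _ ≤ a ^ p := key2

lemma continuous_Fcp {c p : ℝ} (hp : 1 < p) : Continuous (Fcp c p) := by
  have hq : 0 ≤ p - 1 := by linarith
  have h1 : Continuous fun t : ℝ => (max t 0) ^ (p - 1) - (max (-t) 0) ^ (p - 1) := by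
    apply Continuous.sub
    · exact (continuous_id.max continuous_const).rpow_const (fun x => Or.inr hq)
    · exact (continuous_neg.max continuous_const).rpow_const (fun x => Or.inr hq)
  have heq : ∀ t : ℝ, Real.sign t * |t| ^ (p - 1)
      = (max t 0) ^ (p - 1) - (max (-t) 0) ^ (p - 1) := by
    intro t
    rcases lt_trichotomy t 0 with h | h | h
    · rw [Real.sign_of_neg h, abs_of_neg h, max_eq_right h.le, max_eq_left (by linarith),
        Real.zero_rpow (by linarith)]
      ring
    · subst h; simp [Real.sign_zero]
    · rw [Real.sign_of_pos h, abs_of_pos h, max_eq_left h.le, max_eq_right (by linarith),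
        Real.zero_rpow (by linarith)]
      ring
  have : Continuous fun t : ℝ => Real.sign t * |t| ^ (p - 1) := by
    simpa only [← heq] using h1
  unfold Fcp
  simp only [mul_assoc]
  exact continuous_id.add (continuous_const.mul this)

lemma surjective_Fcp {c p : ℝ} (hc : 0 < c) (hp : 1 < p) :
    Function.Surjective (Fcp c p) := by
  have hcp : 0 ≤ c * p / 2 := by positivity
  apply (continuous_Fcp hp).surjective
  · apply Filter.tendsto_atTop_mono' _ (f₁ := id) _ Filter.tendsto_id
    filter_upwards [Filter.eventually_ge_atTop (0:ℝ)] with t ht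
    have hsgn : 0 ≤ Real.sign t := by
      rcases eq_or_lt_of_le ht with h | h
      · rw [← h]; simp
      · rw [Real.sign_of_pos h]; norm_num
    have : 0 ≤ (c * p / 2) * Real.sign t * |t| ^ (p - 1) := by
      apply mul_nonneg (mul_nonneg hcp hsgn) (Real.rpow_nonneg (abs_nonneg t) _)
    simp only [Fcp, id]; linarith
  · apply Filter.tendsto_atBot_mono' _ (f₁ := id) _ Filter.tendsto_id
    filter_upwards [Filter.eventually_le_atBot (0:ℝ)] with t ht
    have hsgn : Real.sign t ≤ 0 := by
      rcases eq_or_lt_of_le ht with h | h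
      · rw [h]; simp
      · rw [Real.sign_of_neg h]; norm_num
    have : (c * p / 2) * Real.sign t * |t| ^ (p - 1) ≤ 0 := by
      apply mul_nonpos_of_nonpos_of_nonneg
      · exact mul_nonpos_of_nonneg_of_nonpos hcp hsgn
      · exact Real.rpow_nonneg (abs_nonneg t) _
    simp only [Fcp, id]; linarith

/-- The minimizer of `M(x) = x² - 2 b x + c |x|^p` is `S_{c,p}(b)`. -/
theorem stmt_0 (p c b : ℝ) (hp : 1 ≤ p) (hc : 0 < c) :
    ∀ x : ℝ,
      (Scp c p b) ^ 2 - 2 * b * (Scp c p b) + c * |Scp c p b| ^ p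
        ≤ x ^ 2 - 2 * b * x + c * |x| ^ p := by
  intro x
  rcases eq_or_lt_of_le hp with hp1 | hp1
  · -- p = 1
    subst hp1
    have hScp : Scp c 1 b = if b > c / 2 then b - c / 2
        else if b < -(c / 2) then b + c / 2 else 0 := by
      rw [Scp, if_pos rfl]
    rw [hScp, Real.rpow_one, Real.rpow_one]
    have hax := abs_nonneg x
    have h1 := le_abs_self x
    have h2 := neg_abs_le x
    split_ifs with h3 h4
    · rw [abs_of_pos (by linarith)]
      nlinarith [sq_nonneg (x - (b - c/2))]
    · rw [abs_of_neg (by linarith)]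
      nlinarith [sq_nonneg (x - (b + c/2))]
    · push_neg at h3 h4
      simp only [abs_zero]
      nlinarith
  · -- p > 1
    have hpne : p ≠ 1 := ne_of_gt hp1
    simp only [Scp, if_neg hpne]
    set s := Function.invFun (Fcp c p) b with hs
    have hFs : Fcp c p s = b := Function.invFun_eq (surjective_Fcp hc hp1 b)
    clear_value s
    have hb : b = s + (c * p / 2) * Real.sign s * |s| ^ (p - 1) := by
      rw [← hFs]; rfl
    -- key: sign s * |s|^(p-1) * (x - s) ≤ |s|^(p-1) * (|x| - |s|)
    have hkey1 : Real.sign s * |s| ^ (p - 1) * (x - s) ≤ |s| ^ (p - 1) * (|x| - |s|) := by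
      rcases lt_trichotomy s 0 with h | h | h
      · rw [Real.sign_of_neg h, abs_of_neg h]
        have h1 : -x ≤ |x| := neg_le_abs x
        have h2 : 0 ≤ (-s) ^ (p - 1) := Real.rpow_nonneg (by linarith) _
        nlinarith
      · subst h
        simp only [Real.sign_zero, zero_mul, abs_zero, sub_zero, zero_mul]
        have : (0:ℝ) ≤ (0:ℝ) ^ (p - 1) := Real.rpow_nonneg le_rfl _
        nlinarith [abs_nonneg x]
      · rw [Real.sign_of_pos h, abs_of_pos h]
        have h1 : x ≤ |x| := le_abs_self x
        have h2 : 0 ≤ s ^ (p - 1) := Real.rpow_nonneg h.le _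
        nlinarith
    have hkey2 : |s| ^ p + p * |s| ^ (p - 1) * (|x| - |s|) ≤ |x| ^ p :=
      rpow_grad_ineq (abs_nonneg x) (abs_nonneg s) hp1
    -- M(x) - M(s) = (x-s)^2 + c(|x|^p - |s|^p - p sign s |s|^(p-1) (x-s)) ≥ 0
    have hp0 : (0:ℝ) < p := by linarith
    rw [hb]
    nlinarith [sq_nonneg (x - s), mul_le_mul_of_nonneg_left hkey1 (mul_pos hc hp0).le,
      mul_le_mul_of_nonneg_left hkey2 hc.le]
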